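/- Let n,d be integers with 2 ≤ n < d, G = gcd(n,d), and d ≡ -G (mod n). Let n' = n/G. Then ∑_{j=0}^{n-1} frac(Gj/n)·j = (n-G)(3n+n'-2)/12, where frac denotes fractional part. -/

import Mathlib

lemma sum_id_q (m : ℕ) : ∑ r ∈ Finset.range m, (r:ℚ) = m*(m-1)/2 := by
  induction m with
  | zero => simp
  | succ k ih => rw [Finset.sum_range_succ, ih]; push_cast; ring

lemma sum_sq_q (m : ℕ) : ∑ r ∈ Finset.range m, (r:ℚ)^2 = m*(m-1)*(2*m-1)/6 := by
  induction m with
  | zero => simp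
  | succ k ih => rw [Finset.sum_range_succ, ih]; push_cast; ring

lemma key (m : ℕ) (hm : 0 < m) (k : ℕ) :
    ∑ j ∈ Finset.range (k*m), Int.fract ((j:ℚ)/m) * j
      = ((m:ℚ)*(m-1)/2) * (k*(k-1)/2) + k * (((m:ℚ)-1)*(2*m-1)/6) := by
  have hm' : (m:ℚ) ≠ 0 := Nat.cast_ne_zero.mpr hm.ne'
  induction k with
  | zero => simp
  | succ k ih =>
    rw [Nat.succ_mul, Finset.sum_range_add, ih]
    have hblock : ∀ i ∈ Finset.range m,
        Int.fract (((k*m+i : ℕ):ℚ)/m) * ((k*m+i : ℕ):ℚ)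
          = (k:ℚ)*i + (i:ℚ)^2/m := by
      intro i hi
      have hi' : i < m := Finset.mem_range.mp hi
      have h1 : ((k*m+i : ℕ):ℚ)/m = (k:ℚ) + (i:ℚ)/m := by
        push_cast; field_simp
      rw [h1]
      have h2 : Int.fract ((k:ℚ) + (i:ℚ)/m) = Int.fract ((i:ℚ)/m) := by
        exact_mod_cast Int.fract_intCast_add (k:ℤ) ((i:ℚ)/m)
      rw [h2, Int.fract_eq_self.mpr ⟨by positivity, by
        rw [div_lt_one (by positivity)]; exact_mod_cast hi'⟩]
      push_cast; field_simp
    rw [Finset.sum_congr rfl hblock, Finset.sum_add_distrib, ← Finset.mul_sum,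
      ← Finset.sum_div, sum_id_q, sum_sq_q]
    push_cast
    field_simp
    ring

theorem sum_fract_d_equiv_neg_G (n d : ℤ) (hn : 2 ≤ n) (hnd : n < d)
    (hmod : d ≡ -(Int.gcd n d : ℤ) [ZMOD n]) :
    ∑ j ∈ Finset.Ico (0 : ℤ) n,
        Int.fract ((((Int.gcd n d : ℤ) * j : ℤ) : ℚ) / (n : ℚ)) * (j : ℚ)
      = ((n : ℚ) - (Int.gcd n d : ℚ))
          * (3 * (n : ℚ) + ((n / (Int.gcd n d : ℤ) : ℤ) : ℚ) - 2) / 12 := by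
  have hn0 : (0:ℤ) < n := by omega
  have hG0 : 0 < Int.gcd n d := Int.gcd_pos_of_ne_zero_left d (by omega)
  set g : ℤ := (Int.gcd n d : ℤ) with hg
  have hg0 : 0 < g := by rw [hg]; exact_mod_cast hG0
  have hdvd : g ∣ n := Int.gcd_dvd_left n d
  set m : ℤ := n / g with hmdef
  have hnm : n = g * m := (Int.mul_ediv_cancel' hdvd).symm
  have hm0 : 0 < m := by nlinarith
  have hmq : ((m.toNat : ℕ) : ℚ) = (m : ℚ) := by
    exact_mod_cast congrArg (Int.cast : ℤ → ℚ) (Int.toNat_of_nonneg hm0.le)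
  have hnq : (n:ℚ) = (g:ℚ) * (m:ℚ) := by exact_mod_cast hnm
  have hmq0 : (m:ℚ) ≠ 0 := by positivity
  have hgq0 : (g:ℚ) ≠ 0 := by positivity
  -- reindex to ℕ
  have hsum : ∑ j ∈ Finset.Ico (0 : ℤ) n, Int.fract ((g:ℚ) * (j:ℚ) / (n : ℚ)) * (j : ℚ)
      = ∑ j ∈ Finset.range n.toNat, Int.fract ((j:ℚ)/(m.toNat:ℚ)) * (j:ℚ) := by
    refine Finset.sum_nbij' (fun j => j.toNat) (fun i => (i:ℤ)) ?_ ?_ ?_ ?_ ?_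
    · intro a ha
      simp only [Finset.mem_Ico] at ha
      simp only [Finset.mem_range]; omega
    · intro a ha
      simp only [Finset.mem_range] at ha
      simp only [Finset.mem_Ico]; omega
    · intro a ha; simp only [Finset.mem_Ico] at ha
      exact Int.toNat_of_nonneg ha.1
    · intro a ha; exact Int.toNat_natCast a
    · intro a ha
      simp only [Finset.mem_Ico] at ha
      have h1 : ((a.toNat : ℕ) : ℚ) = (a : ℚ) := by exact_mod_cast Int.toNat_of_nonneg ha.1
      rw [h1, hmq, hnq]
      congr 2
      field_simp
  have hntn : n.toNat = (Int.gcd n d) * m.toNat := by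
    have h : (n.toNat : ℤ) = g * (m.toNat : ℤ) := by
      rw [Int.toNat_of_nonneg hn0.le, Int.toNat_of_nonneg hm0.le]; exact hnm
    rw [hg] at h
    exact_mod_cast h
  push_cast at hsum ⊢
  rw [hsum, hntn, key m.toNat (by omega) (Int.gcd n d), hmq]
  rw [show ((Int.gcd n d : ℕ) : ℚ) = (g:ℚ) from by exact_mod_cast rfl, hnq]
  field_simp
  ring
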